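/- arXiv:2001.07096 — 2 statements merged into one kernel-verified Lean document; each statement's English description precedes it below -/
import Mathlib

section
/- Let K be a commutative domain and Λ = K[c₁, c₂]. A matrix of the form A = [[1 + a·c₂, -a·c₁], [b·c₂, 1 - b·c₁]] with a, b ∈ Λ has determinant 1 if and only if there exists d ∈ Λ with a = d·c₁ and b = d·c₂. -/
open MvPolynomial Matrix

theorem stmt2 (K : Type*) [CommRing K] [IsDomain K]
    (a b : MvPolynomial (Fin 2) K) :
    (!![1 + a * X 1, -(a * X 0); b * X 1, 1 - b * X 0] :
        Matrix (Fin 2) (Fin 2) (MvPolynomial (Fin 2) K)).det = 1 ↔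
      ∃ d : MvPolynomial (Fin 2) K, a = d * X 0 ∧ b = d * X 1 := by
  rw [Matrix.det_fin_two_of]
  constructor
  · intro h
    have key : a * X 1 = b * X 0 := by ring_nf at h ⊢; linear_combination h
    have hprime : Prime (X 0 : MvPolynomial (Fin 2) K) := by
      have : Prime (Polynomial.X : Polynomial (MvPolynomial (Fin 1) K)) := Polynomial.prime_X
      rw [← MulEquiv.prime_iff (MvPolynomial.finSuccEquiv K 1)]
      simpa [MvPolynomial.finSuccEquiv_X_zero] using this
    have hdvd : (X 0 : MvPolynomial (Fin 2) K) ∣ a * X 1 := ⟨b, by rw [key]; ring⟩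
    rcases hprime.2.2 a (X 1) hdvd with ha | hx
    · obtain ⟨d, hd⟩ := ha
      refine ⟨d, by rw [hd]; ring, ?_⟩
      have : b * X 0 = (d * X 1) * X 0 := by rw [← key, hd]; ring
      exact mul_right_cancel₀ hprime.1 this
    · exfalso
      obtain ⟨q, hq⟩ := hx
      have := congrArg (eval fun i : Fin 2 => if i = 0 then (0 : K) else 1) hq
      simp at this
  · rintro ⟨d, rfl, rfl⟩
    ring
end

section
/- Let K be a commutative domain and Λ = K[c₁, c₂]. The stabilizer of the column (c₁, c₂)ᵀ in GL(2, Λ) equals exactly the set of matrices [[1 + a·c₁·c₂, -a·c₁²], [a·c₂², 1 - a·c₁·c₂]] for a ∈ Λ. -/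
open MvPolynomial Matrix

section aux

variable {K : Type*} [CommRing K] [IsDomain K]

private lemma primeX0 : Prime (X 0 : MvPolynomial (Fin 2) K) := by
  have h := MulEquiv.prime_iff (MvPolynomial.finSuccEquiv K 1).toRingEquiv.toMulEquiv
    (p := (X 0 : MvPolynomial (Fin 2) K))
  rw [← h]
  have e : (MvPolynomial.finSuccEquiv K 1).toRingEquiv.toMulEquiv (X 0) = Polynomial.X :=
    MvPolynomial.finSuccEquiv_X_zero
  rw [e]
  exact Polynomial.prime_X

private lemma primeX1 : Prime (X 1 : MvPolynomial (Fin 2) K) := by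
  have h := MulEquiv.prime_iff (MvPolynomial.renameEquiv K (Equiv.swap (0 : Fin 2) 1)).toRingEquiv.toMulEquiv
    (p := (X 0 : MvPolynomial (Fin 2) K))
  have e : (MvPolynomial.renameEquiv K (Equiv.swap (0 : Fin 2) 1)).toRingEquiv.toMulEquiv (X 0)
      = X 1 := by
    simp [MvPolynomial.renameEquiv_apply]
  rw [e] at h
  exact h.mpr primeX0

private lemma X0_not_dvd_X1 : ¬ (X 0 : MvPolynomial (Fin 2) K) ∣ X 1 := by
  rintro ⟨t, ht⟩
  have := congrArg (MvPolynomial.eval (fun i : Fin 2 => if i = 0 then 0 else 1)) ht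
  simp at this

private lemma X1_not_dvd_X0 : ¬ (X 1 : MvPolynomial (Fin 2) K) ∣ X 0 := by
  rintro ⟨t, ht⟩
  have := congrArg (MvPolynomial.eval (fun i : Fin 2 => if i = 0 then 1 else 0)) ht
  simp at this

omit [IsDomain K] in
private lemma finSuccEquiv_C' (n : ℕ) (u : K) :
    MvPolynomial.finSuccEquiv K n (C u) = Polynomial.C (C u) := by
  simp [MvPolynomial.finSuccEquiv_apply]

private lemma unit_eq_C {f : MvPolynomial (Fin 2) K} (hf : IsUnit f) :
    ∃ u : K, f = C u := by
  obtain ⟨r, hr, hCr⟩ := Polynomial.isUnit_iff.mp (hf.map (MvPolynomial.finSuccEquiv K 1))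
  obtain ⟨s, hs, hCs⟩ := Polynomial.isUnit_iff.mp (hr.map (MvPolynomial.finSuccEquiv K 0))
  obtain ⟨u, rfl⟩ := MvPolynomial.C_surjective (Fin 0) s
  have hr' : r = C u := by
    apply (MvPolynomial.finSuccEquiv K 0).injective
    rw [finSuccEquiv_C']
    exact hCs.symm
  refine ⟨u, ?_⟩
  apply (MvPolynomial.finSuccEquiv K 1).injective
  rw [finSuccEquiv_C']
  rw [← hCr, hr']

end aux

theorem stmt3 (K : Type*) [CommRing K] [IsDomain K]
    (A : Matrix (Fin 2) (Fin 2) (MvPolynomial (Fin 2) K)) :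
    (IsUnit A ∧ A.mulVec ![X 0, X 1] = ![X 0, X 1]) ↔
      ∃ a : MvPolynomial (Fin 2) K,
        A = !![1 + a * X 0 * X 1, -(a * X 0 ^ 2);
               a * X 1 ^ 2, 1 - a * X 0 * X 1] := by
  constructor
  · rintro ⟨hU, hv⟩
    have h0 : A 0 0 * X 0 + A 0 1 * X 1 = X 0 := by
      have := congrFun hv 0
      simpa [Matrix.mulVec, dotProduct, Fin.sum_univ_two] using this
    have h1 : A 1 0 * X 0 + A 1 1 * X 1 = X 1 := by
      have := congrFun hv 1
      simpa [Matrix.mulVec, dotProduct, Fin.sum_univ_two] using this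
    have hd1 : (X 1 : MvPolynomial (Fin 2) K) ∣ (A 0 0 - 1) * X 0 :=
      ⟨-(A 0 1), by linear_combination h0⟩
    obtain ⟨b, hb⟩ := (primeX1.dvd_mul.mp hd1).resolve_right X1_not_dvd_X0
    have hq : A 0 1 = -(b * X 0) := by
      have hz : (X 1 : MvPolynomial (Fin 2) K) * (b * X 0 + A 0 1) = 0 := by
        linear_combination h0 - X 0 * hb
      rcases mul_eq_zero.mp hz with h | h
      · exact absurd h primeX1.ne_zero
      · linear_combination h
    have hd0 : (X 0 : MvPolynomial (Fin 2) K) ∣ (1 - A 1 1) * X 1 :=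
      ⟨A 1 0, by linear_combination -h1⟩
    obtain ⟨d, hd⟩ := (primeX0.dvd_mul.mp hd0).resolve_right X0_not_dvd_X1
    have hr : A 1 0 = d * X 1 := by
      have hz : (X 0 : MvPolynomial (Fin 2) K) * (A 1 0 - d * X 1) = 0 := by
        linear_combination h1 + X 1 * hd
      rcases mul_eq_zero.mp hz with h | h
      · exact absurd h primeX0.ne_zero
      · linear_combination h
    -- determinant
    have hdet : A.det = 1 - X 0 * d + X 1 * b := by
      rw [Matrix.det_fin_two]
      linear_combination (A 1 1) * hb + (-(A 1 0)) * hq + ((X 1) * b + 1) * (-hd) + (b * X 0) * hr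
    obtain ⟨u, hu⟩ := unit_eq_C (hU.map (Matrix.detMonoidHom))
    have hu' : A.det = C u := hu
    have hcc : u = 1 := by
      have := congrArg MvPolynomial.constantCoeff (hdet.symm.trans hu')
      simpa using this.symm
    have key : (X 0 : MvPolynomial (Fin 2) K) * d = X 1 * b := by
      have : (1 : MvPolynomial (Fin 2) K) - X 0 * d + X 1 * b = 1 := by
        rw [← hdet, hu', hcc, MvPolynomial.C_1]
      linear_combination -this
    obtain ⟨a, ha⟩ := (primeX0.dvd_mul.mp ⟨d, key.symm⟩).resolve_left X0_not_dvd_X1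
    have hda : d = X 1 * a := by
      have hz : (X 0 : MvPolynomial (Fin 2) K) * (d - X 1 * a) = 0 := by
        linear_combination key + X 1 * ha
      rcases mul_eq_zero.mp hz with h | h
      · exact absurd h primeX0.ne_zero
      · linear_combination h
    refine ⟨a, ?_⟩
    have hA00 : A 0 0 = 1 + a * X 0 * X 1 := by
      linear_combination hb + X 1 * ha
    have hA01 : A 0 1 = -(a * X 0 ^ 2) := by
      linear_combination hq - X 0 * ha
    have hA10 : A 1 0 = a * X 1 ^ 2 := by
      linear_combination hr + X 1 * hda
    have hA11 : A 1 1 = 1 - a * X 0 * X 1 := by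
      linear_combination -hd - X 0 * hda
    ext i j
    fin_cases i <;> fin_cases j <;>
      simp [hA00, hA01, hA10, hA11]
  · rintro ⟨a, rfl⟩
    constructor
    · rw [Matrix.isUnit_iff_isUnit_det]
      have : (!![1 + a * X 0 * X 1, -(a * X 0 ^ 2);
               a * X 1 ^ 2, 1 - a * X 0 * X 1] : Matrix (Fin 2) (Fin 2) _).det = 1 := by
        rw [Matrix.det_fin_two_of]; ring
      rw [this]; exact isUnit_one
    · funext i
      fin_cases i <;>
        simp [Matrix.mulVec, dotProduct, Fin.sum_univ_two] <;> ring
end
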